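/- Let a > 0 and let F, G ∈ L¹(ℝ, ℂ) be continuous functions whose Fourier transforms F̂, Ĝ are continuous and compactly supported. Then cosh(aD)(F·G) = (cosh(aD)F)·(cosh(aD)G) + (sinh(aD)F)·(sinh(aD)G) pointwise on ℝ, where cosh(aD)h and sinh(aD)h denote the Fourier multiplier operators with symbols cosh(aξ) and sinh(aξ) respectively. -/

import Mathlib

/-!
Statement 9: the addition formula `cosh(x+y) = cosh x cosh y + sinh x sinh y` at the
level of Fourier multipliers: for `F, G` integrable continuous functions whose Fourier
transforms are continuous and compactly supported,
`cosh(aD)(F·G) = (cosh(aD)F)·(cosh(aD)G) + (sinh(aD)F)·(sinh(aD)G)` pointwise.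
-/

noncomputable section

open FourierTransform

/-- The Fourier multiplier operator on `ℝ` with (real) symbol `m`, defined as
`h ↦ ℱ⁻¹(m·ĥ)`. -/
def fourierMult (m : ℝ → ℝ) (h : ℝ → ℂ) : ℝ → ℂ :=
  𝓕⁻ (fun ξ => (m ξ : ℂ) * 𝓕 h ξ)

namespace CoshMultAux

open MeasureTheory Real Function

lemma e_cont : Continuous fun r : ℝ => (𝐞 r : ℂ) :=
  continuous_induced_dom.comp Real.continuous_fourierChar

lemma e_add (r s : ℝ) : (𝐞 (r + s) : ℂ) = 𝐞 r * 𝐞 s := by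
  rw [AddChar.map_add_eq_mul]; simp

lemma e_norm (r : ℝ) : ‖(𝐞 r : ℂ)‖ = 1 := Circle.norm_coe _

lemma fourier_eq (f : ℝ → ℂ) (w : ℝ) :
    𝓕 f w = ∫ v : ℝ, (𝐞 (-(v * w)) : ℂ) * f v := by
  rw [Real.fourier_real_eq]
  simp_rw [Circle.smul_def, smul_eq_mul]

/-- `fourierMult` written as an explicit integral. -/
lemma fourierMult_eq (m : ℝ → ℝ) (h : ℝ → ℂ) (x : ℝ) :
    fourierMult m h x = ∫ ξ : ℝ, (𝐞 (ξ * x) : ℂ) * ((m ξ : ℂ) * 𝓕 h ξ) := by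
  rw [fourierMult, Real.fourierInv_eq_fourier_neg, fourier_eq]
  simp_rw [mul_neg, neg_neg]

lemma pull2 (c d : ℂ) (g : ℝ → ℂ) :
    c * (d * ∫ η : ℝ, g η) = ∫ η : ℝ, c * (d * g η) := by
  rw [← integral_const_mul, ← integral_const_mul]

/-- multiplier integrand integrability -/
lemma mult_integrable {m : ℝ → ℝ} (hm : Continuous m) {Φ : ℝ → ℂ}
    (hΦc : Continuous Φ) (hΦs : HasCompactSupport Φ) (x : ℝ) :
    Integrable (fun ξ : ℝ => (𝐞 (ξ * x) : ℂ) * ((m ξ : ℂ) * Φ ξ)) := by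
  apply Continuous.integrable_of_hasCompactSupport
  · exact (e_cont.comp (continuous_id.mul continuous_const)).mul
      ((Complex.continuous_ofReal.comp hm).mul hΦc)
  · apply hΦs.mono
    intro ξ hξ h
    apply hξ
    simp [h]

/-- The convolution identity `𝓕 (F·G) = 𝓕 F ⋆ 𝓕 G`. -/
lemma fourier_mul {F G : ℝ → ℂ} (hFc : Continuous F) (hFi : Integrable F)
    (hGc : Continuous G) (hGi : Integrable G)
    (hFhat_cont : Continuous (𝓕 F)) (hFhat_supp : HasCompactSupport (𝓕 F)) (ξ : ℝ) :
    𝓕 (fun y => F y * G y) ξ = ∫ η : ℝ, 𝓕 F η * 𝓕 G (ξ - η) := by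
  have hΦi : Integrable (𝓕 F) :=
    hFhat_cont.integrable_of_hasCompactSupport hFhat_supp
  have hinv : ∀ y : ℝ, F y = ∫ η : ℝ, (𝐞 (η * y) : ℂ) * 𝓕 F η := by
    intro y
    conv_lhs => rw [← hFc.fourierInv_fourier_eq hFi hΦi]
    rw [Real.fourierInv_eq_fourier_neg, fourier_eq]
    simp_rw [mul_neg, neg_neg]
  have key : Integrable (uncurry fun y η : ℝ =>
      (𝐞 (-(y * ξ)) : ℂ) * ((𝐞 (η * y) : ℂ) * 𝓕 F η * G y)) (volume.prod volume) := by
    have hc : Continuous (uncurry fun y η : ℝ =>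
        (𝐞 (-(y * ξ)) : ℂ) * ((𝐞 (η * y) : ℂ) * 𝓕 F η * G y)) := by
      apply Continuous.mul
      · exact e_cont.comp ((continuous_fst.mul continuous_const).neg)
      · exact ((e_cont.comp (continuous_snd.mul continuous_fst)).mul
          (hFhat_cont.comp continuous_snd)).mul (hGc.comp continuous_fst)
    apply Integrable.mono' (hGi.norm.mul_prod hΦi.norm) hc.aestronglyMeasurable
    filter_upwards with z
    simp only [uncurry]
    rw [norm_mul, norm_mul, norm_mul, e_norm, e_norm]
    exact le_of_eq (by ring)
  calc 𝓕 (fun y => F y * G y) ξ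
      = ∫ y : ℝ, (𝐞 (-(y * ξ)) : ℂ) * (F y * G y) := fourier_eq _ _
    _ = ∫ y : ℝ, ∫ η : ℝ, (𝐞 (-(y * ξ)) : ℂ) * ((𝐞 (η * y) : ℂ) * 𝓕 F η * G y) := by
        refine integral_congr_ae (.of_forall fun y => ?_)
        dsimp only
        have h1 : (𝐞 (-(y * ξ)) : ℂ) * (F y * G y)
            = (𝐞 (-(y * ξ)) : ℂ) * (G y * ∫ η : ℝ, (𝐞 (η * y) : ℂ) * 𝓕 F η) := by
          rw [← hinv y]; ring
        rw [h1, pull2]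
        refine integral_congr_ae (.of_forall fun η => ?_)
        ring
    _ = ∫ η : ℝ, ∫ y : ℝ, (𝐞 (-(y * ξ)) : ℂ) * ((𝐞 (η * y) : ℂ) * 𝓕 F η * G y) :=
        integral_integral_swap key
    _ = ∫ η : ℝ, 𝓕 F η * 𝓕 G (ξ - η) := by
        refine integral_congr_ae (.of_forall fun η => ?_)
        dsimp only
        rw [fourier_eq G, ← integral_const_mul]
        refine integral_congr_ae (.of_forall fun y => ?_)
        have h2 : (𝐞 (-(y * ξ)) : ℂ) * (𝐞 (η * y) : ℂ) = (𝐞 (-(y * (ξ - η))) : ℂ) := by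
          rw [← e_add]; ring_nf
        calc (𝐞 (-(y * ξ)) : ℂ) * ((𝐞 (η * y) : ℂ) * 𝓕 F η * G y)
            = ((𝐞 (-(y * ξ)) : ℂ) * (𝐞 (η * y) : ℂ)) * 𝓕 F η * G y := by ring
          _ = 𝓕 F η * ((𝐞 (-(y * (ξ - η))) : ℂ) * G y) := by rw [h2]; ring

end CoshMultAux

open CoshMultAux MeasureTheory Real Function

theorem cosh_multiplier_product_rule
    (a : ℝ) (ha : 0 < a) (F G : ℝ → ℂ)
    (hFc : Continuous F) (hFi : MeasureTheory.Integrable F)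
    (hGc : Continuous G) (hGi : MeasureTheory.Integrable G)
    (hFhat_cont : Continuous (𝓕 F)) (hFhat_supp : HasCompactSupport (𝓕 F))
    (hGhat_cont : Continuous (𝓕 G)) (hGhat_supp : HasCompactSupport (𝓕 G)) :
    ∀ x : ℝ,
      fourierMult (fun ξ => Real.cosh (a * ξ)) (fun y => F y * G y) x
        = fourierMult (fun ξ => Real.cosh (a * ξ)) F x
            * fourierMult (fun ξ => Real.cosh (a * ξ)) G x
          + fourierMult (fun ξ => Real.sinh (a * ξ)) F x
            * fourierMult (fun ξ => Real.sinh (a * ξ)) G x := by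
  intro x
  have hΦi : Integrable (𝓕 F) := hFhat_cont.integrable_of_hasCompactSupport hFhat_supp
  have hΨi : Integrable (𝓕 G) := hGhat_cont.integrable_of_hasCompactSupport hGhat_supp
  set A₁ : ℝ → ℂ := fun η => (𝐞 (η * x) : ℂ) * ((Real.cosh (a * η) : ℂ) * 𝓕 F η) with hA₁def
  set B₁ : ℝ → ℂ := fun ζ => (𝐞 (ζ * x) : ℂ) * ((Real.cosh (a * ζ) : ℂ) * 𝓕 G ζ) with hB₁def
  set A₂ : ℝ → ℂ := fun η => (𝐞 (η * x) : ℂ) * ((Real.sinh (a * η) : ℂ) * 𝓕 F η) with hA₂def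
  set B₂ : ℝ → ℂ := fun ζ => (𝐞 (ζ * x) : ℂ) * ((Real.sinh (a * ζ) : ℂ) * 𝓕 G ζ) with hB₂def
  have hA₁ : Integrable A₁ :=
    mult_integrable (Real.continuous_cosh.comp (continuous_const.mul continuous_id))
      hFhat_cont hFhat_supp x
  have hB₁ : Integrable B₁ :=
    mult_integrable (Real.continuous_cosh.comp (continuous_const.mul continuous_id))
      hGhat_cont hGhat_supp x
  have hA₂ : Integrable A₂ :=
    mult_integrable (Real.continuous_sinh.comp (continuous_const.mul continuous_id))
      hFhat_cont hFhat_supp x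
  have hB₂ : Integrable B₂ :=
    mult_integrable (Real.continuous_sinh.comp (continuous_const.mul continuous_id))
      hGhat_cont hGhat_supp x
  -- the two-variable integrand for the left-hand side
  set Q : ℝ → ℝ → ℂ := fun ξ η =>
    (𝐞 (ξ * x) : ℂ) * ((Real.cosh (a * ξ) : ℂ) * (𝓕 F η * 𝓕 G (ξ - η))) with hQdef
  have hQint : Integrable (uncurry Q) (volume.prod volume) := by
    apply Continuous.integrable_of_hasCompactSupport
    · apply Continuous.mul (e_cont.comp (continuous_fst.mul continuous_const))
      apply Continuous.mul
      · exact Complex.continuous_ofReal.comp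
          (Real.continuous_cosh.comp (continuous_const.mul continuous_fst))
      · exact (hFhat_cont.comp continuous_snd).mul
          (hGhat_cont.comp (continuous_fst.sub continuous_snd))
    · apply HasCompactSupport.intro ((IsCompact.add hGhat_supp hFhat_supp).prod hFhat_supp)
      rintro ⟨ξ, η⟩ hz
      simp only [uncurry, hQdef]
      by_cases hη : 𝓕 F η = 0
      · simp [hη]
      by_cases hζ : 𝓕 G (ξ - η) = 0
      · simp [hζ]
      exact absurd ⟨⟨ξ - η, subset_tsupport _ hζ, η, subset_tsupport _ hη, by ring⟩,
        subset_tsupport _ hη⟩ hz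
  -- pointwise addition formula
  have key : ∀ η ζ : ℝ, Q (ζ + η) η = A₁ η * B₁ ζ + A₂ η * B₂ ζ := by
    intro η ζ
    simp only [hQdef, hA₁def, hB₁def, hA₂def, hB₂def, add_sub_cancel_right]
    rw [show (ζ + η) * x = ζ * x + η * x by ring, e_add,
      show a * (ζ + η) = a * ζ + a * η by ring, Real.cosh_add]
    push_cast
    ring
  calc fourierMult (fun ξ => Real.cosh (a * ξ)) (fun y => F y * G y) x
      = ∫ ξ : ℝ, ∫ η : ℝ, Q ξ η := by
        rw [fourierMult_eq]
        refine integral_congr_ae (.of_forall fun ξ => ?_)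
        dsimp only [hQdef]
        rw [fourier_mul hFc hFi hGc hGi hFhat_cont hFhat_supp ξ, pull2]
    _ = ∫ η : ℝ, ∫ ξ : ℝ, Q ξ η := integral_integral_swap hQint
    _ = ∫ η : ℝ, ∫ ζ : ℝ, Q (ζ + η) η := by
        refine integral_congr_ae (.of_forall fun η => ?_)
        exact (integral_add_right_eq_self (fun ζ => Q ζ η) η).symm
    _ = ∫ η : ℝ, ∫ ζ : ℝ, (A₁ η * B₁ ζ + A₂ η * B₂ ζ) := by
        refine integral_congr_ae (.of_forall fun η => ?_)
        exact integral_congr_ae (.of_forall fun ζ => key η ζ)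
    _ = ∫ η : ℝ, ((∫ ζ : ℝ, A₁ η * B₁ ζ) + ∫ ζ : ℝ, A₂ η * B₂ ζ) := by
        refine integral_congr_ae (.of_forall fun η => ?_)
        exact integral_add (hB₁.const_mul _) (hB₂.const_mul _)
    _ = (∫ η : ℝ, ∫ ζ : ℝ, A₁ η * B₁ ζ) + ∫ η : ℝ, ∫ ζ : ℝ, A₂ η * B₂ ζ := by
        refine integral_add ?_ ?_
        · exact (hA₁.mul_const (∫ ζ : ℝ, B₁ ζ)).congr
            (.of_forall fun η => (integral_const_mul _ _).symm)
        · exact (hA₂.mul_const (∫ ζ : ℝ, B₂ ζ)).congr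
            (.of_forall fun η => (integral_const_mul _ _).symm)
    _ = (∫ η : ℝ, A₁ η) * (∫ ζ : ℝ, B₁ ζ) + (∫ η : ℝ, A₂ η) * (∫ ζ : ℝ, B₂ ζ) := by
        congr 1
        · rw [← integral_mul_const]
          exact integral_congr_ae (.of_forall fun η => integral_const_mul _ _)
        · rw [← integral_mul_const]
          exact integral_congr_ae (.of_forall fun η => integral_const_mul _ _)
    _ = _ := by rw [fourierMult_eq, fourierMult_eq, fourierMult_eq, fourierMult_eq]
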